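/- There exists a Mealy automaton 𝒜 = (Q, A, τ) with A a finite alphabet (and Q an infinite set of states) whose generated semigroup S contains a finitely generated infinite subsemigroup T such that every orbit T·ξ = {t·ξ : t ∈ T} with ξ ∈ A^ω is finite. -/

import Mathlib

/-!
Framework for Mealy automata `𝒜 = (Q, A, τ)` with `τ q a = (q·a, q@a)`.

* `Mealy.act τ q` is the endomorphism of the free monoid `A*` (modelled as `List A`)
  induced by the state `q`, defined by `q·(a⌢u) = (q·a)⌢((q@a)·u)`.
* `Mealy.Sgp τ` is the semigroup (with identity adjoined, i.e. the submonoid) of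
  `End(A*)` generated by the states.
* `Mealy.extω f ξ` is the extension of a length- and prefix-preserving endomorphism
  `f` of `A*` to right-infinite words `ξ : ℕ → A`: its `n`-th letter is the `n`-th
  letter of the image of the length-`(n+1)` prefix of `ξ`.
* `Mealy.catω v ξ` is the concatenation `v⌢ξ` of a finite word with an infinite word.
* `Mealy.orbit τ u` and `Mealy.orbitω τ ξ` are the orbits `S·u` and `S·ξ`.
* `Mealy.mval τ v` is `m_v = sup_{ξ ∈ A^ω} |S·(v⌢ξ)| ∈ ℕ∞`.
* `Mealy.sect f w` is the section `f@w`, characterized for `f ∈ S` by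
  `f·(w⌢u) = (f·w)⌢((f@w)·u)`.
-/

namespace Mealy

variable {Q A : Type*}

/-- The action of a state on a finite word: `q·(a⌢u) = (q·a)⌢((q@a)·u)`. -/
def act (τ : Q → A → A × Q) : Q → List A → List A
  | _, [] => []
  | q, a :: u => (τ q a).1 :: act τ (τ q a).2 u

/-- The semigroup `S ≤ End(A*)` generated by the states of the automaton
(as a submonoid of `Function.End (List A)`, where multiplication is composition). -/
def Sgp (τ : Q → A → A × Q) : Submonoid (Function.End (List A)) :=
  Submonoid.closure { f : Function.End (List A) | ∃ q : Q, f = act τ q }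

/-- Extension of a (length- and prefix-preserving) endomorphism of `A*` to `A^ω`:
the `n`-th letter of `f·ξ` is the `n`-th letter of the image of the prefix of `ξ`
of length `n+1`. -/
def extω (f : Function.End (List A)) (ξ : ℕ → A) : ℕ → A :=
  fun n => (f ((List.range (n + 1)).map ξ)).getD n (ξ n)

/-- Concatenation `v⌢ξ` of a finite word with a right-infinite word. -/
def catω (v : List A) (ξ : ℕ → A) : ℕ → A :=
  fun n => v.getD n (ξ (n - v.length))

/-- The orbit `S·u` of a finite word. -/
def orbit (τ : Q → A → A × Q) (u : List A) : Set (List A) :=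
  (fun f : Function.End (List A) => f u) '' (Sgp τ : Set (Function.End (List A)))

/-- The orbit `S·ξ` of a right-infinite word. -/
def orbitω (τ : Q → A → A × Q) (ξ : ℕ → A) : Set (ℕ → A) :=
  (fun f : Function.End (List A) => extω f ξ) '' (Sgp τ : Set (Function.End (List A)))

/-- `m_v = sup_{ξ ∈ A^ω} |S·(v⌢ξ)| ∈ ℕ ∪ {∞}`. -/
noncomputable def mval (τ : Q → A → A × Q) (v : List A) : ℕ∞ :=
  ⨆ ξ : ℕ → A, (orbitω τ (catω v ξ)).encard

/-- The section `f@w` of an endomorphism of `A*` at the word `w`. -/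
def sect (f : Function.End (List A)) (w : List A) : Function.End (List A) :=
  fun u => (f (w ++ u)).drop w.length

end Mealy
namespace Mealy

/-! ### Construction for Statement 17 -/

private abbrev QQ : Type := Option (ℕ ⊕ ℕ)

/-- The transition function: state `inl j` copies `true`s (counting them),
on the first `false` copies it and switches to `inr j`; state `inr (j+1)`
turns the first `false` among the next `j+1` letters into `true`. -/
private def tau0 : QQ → Bool → Bool × QQ
  | none, a => (a, none)
  | some (Sum.inl j), true => (true, some (Sum.inl (j + 1)))
  | some (Sum.inl j), false => (false, some (Sum.inr j))
  | some (Sum.inr 0), a => (a, none)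
  | some (Sum.inr (_ + 1)), false => (true, none)
  | some (Sum.inr (j + 1)), true => (true, some (Sum.inr j))

private def B (j : ℕ) : List Bool → List Bool := act tau0 (some (Sum.inr j))
private def F (j : ℕ) : List Bool → List Bool := act tau0 (some (Sum.inl j))

private lemma act_id : ∀ u : List Bool, act tau0 none u = u
  | [] => rfl
  | a :: u => by simp [act, tau0, act_id u]

private lemma B_zero : ∀ u : List Bool, B 0 u = u
  | [] => rfl
  | a :: u => by simp [B, act, tau0, act_id u]

private lemma B_false (j : ℕ) (u : List Bool) : B (j + 1) (false :: u) = true :: u := by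
  simp [B, act, tau0, act_id u]

private lemma B_true (j : ℕ) (u : List Bool) : B (j + 1) (true :: u) = true :: B j u := by
  simp [B, act, tau0]

private lemma F_true (j : ℕ) (u : List Bool) : F j (true :: u) = true :: F (j + 1) u := by
  simp [F, act, tau0]

private lemma F_false (j : ℕ) (u : List Bool) : F j (false :: u) = false :: B j u := by
  simp [F, B, act, tau0]

private lemma B_getElem? : ∀ (u : List Bool) (j i : ℕ), j ≤ i → (B j u)[i]? = u[i]?
  | [], j, i, _ => by simp [B, act]
  | a :: u, 0, i, _ => by rw [B_zero]
  | a :: u, j + 1, 0, h => by omega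
  | false :: u, j + 1, i + 1, h => by rw [B_false]; simp
  | true :: u, j + 1, i + 1, h => by
      rw [B_true]
      simpa using B_getElem? u j i (by omega)

private lemma F_decomp : ∀ (k j : ℕ) (v : List Bool),
    F j (List.replicate k true ++ false :: v)
      = List.replicate k true ++ false :: B (j + k) v
  | 0, j, v => by simpa using F_false j v
  | k + 1, j, v => by
      have h : j + 1 + k = j + (k + 1) := by omega
      rw [List.replicate_succ, List.cons_append, F_true, F_decomp k (j + 1) v, h,
        List.cons_append]

private lemma F0_iter (k : ℕ) (n : ℕ) : ∀ v : List Bool,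
    (F 0)^[n] (List.replicate k true ++ false :: v)
      = List.replicate k true ++ false :: (B k)^[n] v := by
  induction n with
  | zero => intro v; rfl
  | succ n ih =>
      intro v
      rw [Function.iterate_succ_apply, Function.iterate_succ_apply]
      have h0 : F 0 (List.replicate k true ++ false :: v)
          = List.replicate k true ++ false :: B k v := by
        simpa using F_decomp k 0 v
      rw [h0, ih]

private lemma B_iter_getElem? (k n : ℕ) (v : List Bool) (i : ℕ) (h : k ≤ i) :
    ((B k)^[n] v)[i]? = v[i]? := by
  induction n with
  | zero => rfl
  | succ n ih =>
      rw [Function.iterate_succ_apply']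
      rw [B_getElem? _ k i h, ih]

private lemma F_replicate : ∀ (m j : ℕ), F j (List.replicate m true) = List.replicate m true
  | 0, j => rfl
  | m + 1, j => by
      rw [List.replicate_succ, F_true, F_replicate m (j + 1), ← List.replicate_succ]

private lemma B_step : ∀ (p : ℕ) {K : ℕ}, p < K → ∀ w : List Bool,
    B K (List.replicate p true ++ false :: w) = List.replicate (p + 1) true ++ w
  | 0, K, h, w => by
      obtain ⟨j, rfl⟩ : ∃ j, K = j + 1 := ⟨K - 1, by omega⟩
      simpa using B_false j w
  | p + 1, K, h, w => by
      obtain ⟨j, rfl⟩ : ∃ j, K = j + 1 := ⟨K - 1, by omega⟩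
      rw [List.replicate_succ, List.cons_append, B_true, B_step p (by omega) w]
      simp [List.replicate_succ]

private lemma B_iter_rep (k : ℕ) : ∀ n, n ≤ k →
    (B k)^[n] (List.replicate k false)
      = List.replicate n true ++ List.replicate (k - n) false
  | 0, _ => by simp
  | n + 1, h => by
      rw [Function.iterate_succ_apply', B_iter_rep k n (by omega)]
      rw [show k - n = (k - n - 1) + 1 by omega, List.replicate_succ]
      rw [B_step n (by omega)]
      congr 2

/-- The generator of our subsemigroup, as an element of `Function.End (List Bool)`. -/
private def fE : Function.End (List Bool) := F 0

private lemma end_pow_apply (g : Function.End (List Bool)) (n : ℕ) (u : List Bool) :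
    (g ^ n) u = g^[n] u := by
  induction n generalizing u with
  | zero => rfl
  | succ n ih =>
      rw [pow_succ]
      exact ih (g u)

private lemma mem_T {x : Function.End (List Bool)} :
    x ∈ Subsemigroup.closure {fE} ↔ ∃ n : ℕ, fE ^ (n + 1) = x := by
  constructor
  · intro hx
    induction hx using Subsemigroup.closure_induction with
    | mem y hy =>
        exact ⟨0, by rw [pow_one]; exact (Set.mem_singleton_iff.mp hy).symm⟩
    | mul a b ha hb iha ihb =>
        obtain ⟨n, rfl⟩ := iha
        obtain ⟨m, rfl⟩ := ihb
        exact ⟨n + m + 1, by rw [← pow_add]; congr 1; omega⟩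
  · rintro ⟨n, rfl⟩
    induction n with
    | zero =>
        rw [pow_one]
        exact Subsemigroup.subset_closure (Set.mem_singleton fE)
    | succ n ih =>
        rw [pow_succ]
        exact Subsemigroup.mul_mem _ ih (Subsemigroup.subset_closure (Set.mem_singleton fE))

private lemma fE_pow_apply_rep (a M : ℕ) (ha : a + 1 ≤ M) :
    (fE ^ (a + 1)) (List.replicate M true ++ false :: List.replicate M false)
      = List.replicate M true ++ false ::
          (List.replicate (a + 1) true ++ List.replicate (M - (a + 1)) false) := by
  rw [end_pow_apply]
  show (F 0)^[a + 1] _ = _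
  rw [F0_iter, B_iter_rep M (a + 1) ha]

private lemma fE_pow_injective : Function.Injective (fun n : ℕ => fE ^ (n + 1)) := by
  have key : ∀ a b : ℕ, a < b → fE ^ (a + 1) ≠ fE ^ (b + 1) := by
    intro a b hab hEq
    set M := b + 1 with hM
    have h1 := fE_pow_apply_rep a M (by omega)
    have h2 := fE_pow_apply_rep b M (by omega)
    rw [hEq] at h1
    have h3 : (List.replicate (a + 1) true ++ List.replicate (M - (a + 1)) false : List Bool)
        = List.replicate (b + 1) true ++ List.replicate (M - (b + 1)) false := by
      have := h1.symm.trans h2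
      have := List.append_cancel_left this
      exact (List.cons.injEq _ _ _ _).mp this |>.2
    have hL : (List.replicate (a + 1) true ++ List.replicate (M - (a + 1)) false
        : List Bool)[a + 1]? = some false := by
      rw [List.getElem?_append_right (by simp)]
      simp only [List.length_replicate, Nat.sub_self]
      rw [List.getElem?_replicate]
      simp only [if_pos (by omega : 0 < M - (a + 1))]
    have hR : (List.replicate (b + 1) true ++ List.replicate (M - (b + 1)) false
        : List Bool)[a + 1]? = some true := by
      rw [List.getElem?_append_left (by simpa using hab)]
      rw [List.getElem?_replicate]
      simp only [if_pos (by omega : a + 1 < b + 1)]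
    rw [h3, hR] at hL
    exact Bool.noConfusion (Option.some.injEq _ _ ▸ hL : (true : Bool) = false)
  intro a b h
  rcases lt_trichotomy a b with h' | h' | h'
  · exact absurd h (key a b h')
  · exact h'
  · exact absurd h.symm (key b a h')

private lemma tail_fixed (ξ : ℕ → Bool) : ∃ N : ℕ, ∀ n i, N ≤ i →
    ((fE ^ (n + 1)) ((List.range (i + 1)).map ξ))[i]? = some (ξ i) := by
  by_cases hf : ∃ m, ξ m = false
  · set k := Nat.find hf with hkdef
    have hk : ξ k = false := Nat.find_spec hf
    have hlt : ∀ m, m < k → ξ m = true := by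
      intro m hm
      have := Nat.find_min hf hm
      simpa using this
    refine ⟨2 * k + 1, ?_⟩
    intro n i hi
    have hdec : (List.range (i + 1)).map ξ
        = List.replicate k true ++ false ::
            (List.range (i - k)).map (fun m => ξ (k + 1 + m)) := by
      have h1 : i + 1 = (k + 1) + (i - k) := by omega
      rw [h1, List.range_add, List.map_append]
      have pieceA : (List.range (k + 1)).map ξ = List.replicate k true ++ [false] := by
        rw [List.range_succ, List.map_append]
        have : (List.range k).map ξ = List.replicate k true := by
          rw [List.eq_replicate_iff]
          constructor
          · simp
          · intro b hb
            obtain ⟨m, hm, rfl⟩ := List.mem_map.mp hb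
            exact hlt m (List.mem_range.mp hm)
        rw [this]
        simp [hk]
      have pieceB : ((List.range (i - k)).map (fun m => (k + 1) + m)).map ξ
          = (List.range (i - k)).map (fun m => ξ (k + 1 + m)) := by
        rw [List.map_map]; rfl
      rw [pieceA, pieceB, List.append_assoc, List.singleton_append]
    rw [end_pow_apply, hdec]
    show ((F 0)^[n + 1] _)[i]? = _
    rw [F0_iter]
    rw [List.getElem?_append_right (by simp; omega)]
    rw [show i - (List.replicate k true).length = (i - k - 1) + 1 by simp; omega]
    rw [List.getElem?_cons_succ]
    rw [B_iter_getElem? k (n + 1) _ (i - k - 1) (by omega)]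
    rw [List.getElem?_map, List.getElem?_range (by omega : i - k - 1 < i - k)]
    simp only [Option.map_some]
    congr 2
    omega
  · refine ⟨0, ?_⟩
    intro n i _
    push_neg at hf
    have hall : ∀ m, ξ m = true := by
      intro m
      have := hf m
      simpa using this
    have hrep : (List.range (i + 1)).map ξ = List.replicate (i + 1) true := by
      rw [List.eq_replicate_iff]
      constructor
      · simp
      · intro b hb
        obtain ⟨m, _, rfl⟩ := List.mem_map.mp hb
        exact hall m
    rw [end_pow_apply, hrep]
    show ((F 0)^[n + 1] _)[i]? = _
    rw [Function.iterate_fixed (F_replicate (i + 1) 0) (n + 1)]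
    rw [List.getElem?_replicate, if_pos (by omega : i < i + 1), hall i]

private lemma finite_agree (ξ : ℕ → Bool) (N : ℕ) :
    {η : ℕ → Bool | ∀ i, N ≤ i → η i = ξ i}.Finite := by
  have himg : ((fun (η : ℕ → Bool) (j : Fin N) => η j.1) ''
      {η : ℕ → Bool | ∀ i, N ≤ i → η i = ξ i}).Finite := Set.toFinite _
  refine Set.Finite.of_finite_image himg ?_
  intro η1 h1 η2 h2 hEq
  funext i
  rcases lt_or_ge i N with h | h
  · exact congrFun hEq ⟨i, h⟩
  · rw [h1 i h, h2 i h]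

theorem exists_fg_infinite_subsemigroup_all_orbits_finite :
    ∃ (Q A : Type) (_ : Infinite Q) (_ : Finite A) (τ : Q → A → A × Q)
      (T : Subsemigroup (Function.End (List A))),
      (T : Set (Function.End (List A))) ⊆ (Sgp τ : Set (Function.End (List A))) ∧
        (∃ F : Set (Function.End (List A)), F.Finite ∧ T = Subsemigroup.closure F) ∧
        (T : Set (Function.End (List A))).Infinite ∧
        ∀ ξ : ℕ → A, ((fun f : Function.End (List A) => extω f ξ) ''
          (T : Set (Function.End (List A)))).Finite := by
  classical
  refine ⟨QQ, Bool, inferInstance, inferInstance, tau0, Subsemigroup.closure {fE},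
    ?_, ⟨{fE}, Set.finite_singleton _, rfl⟩, ?_, ?_⟩
  · intro x hx
    obtain ⟨n, rfl⟩ := mem_T.mp hx
    have hfE : fE ∈ Sgp tau0 :=
      Submonoid.subset_closure ⟨some (Sum.inl 0), rfl⟩
    exact pow_mem hfE _
  · exact Set.infinite_of_injective_forall_mem fE_pow_injective
      (fun n => mem_T.mpr ⟨n, rfl⟩)
  · intro ξ
    obtain ⟨N, hN⟩ := tail_fixed ξ
    refine (finite_agree ξ N).subset ?_
    rintro η ⟨g, hg, rfl⟩
    obtain ⟨n, rfl⟩ := mem_T.mp hg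
    intro i hi
    show extω (fE ^ (n + 1)) ξ i = ξ i
    rw [extω, List.getD_eq_getElem?_getD, hN n i hi]
    rfl


end Mealy
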